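/- Let (E, ℋ) be a Steiner system of type (3,6,22) and let M be its associated matroid of rank 4, whose bases are the 4-element subsets of E contained in no block. Then P_M(t) = 1 + 55t. -/

import Mathlib

open Polynomial Matroid

namespace KLPaper

variable {α : Type} [Fintype α]

/-- The contraction `M ⧸ C` of a set `C` in a matroid `M`, defined (as is standard,
see e.g. Oxley, Prop. 3.1.1) as the dual of the deletion of `C` from the dual matroid,
where deletion of `C` is restriction to `M.E \ C`.  Its ground set is `M.E \ C`. -/
noncomputable def contract (M : Matroid α) (C : Set α) : Matroid α :=
  (M✶ ↾ (M.E \ C))✶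

scoped infixl:75 " ⧸ " => KLPaper.contract

/-- The rank `rk M S` of a set `S` in a matroid `M`: the largest cardinality of an
independent subset of `S`. -/
noncomputable def rk (M : Matroid α) (S : Set α) : ℕ :=
  sSup {n | ∃ I, I ⊆ S ∧ M.Indep I ∧ I.ncard = n}

/-- The rank of a matroid: the rank of its ground set. -/
noncomputable def rank (M : Matroid α) : ℕ := rk M M.E

/-- A circuit of a matroid: a minimal dependent set, i.e. a dependent subset of the
ground set all of whose proper subsets are independent. -/
def IsCircuit (M : Matroid α) (C : Set α) : Prop :=
  M.Dep C ∧ ∀ D ⊂ C, M.Indep D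

/-- A hyperplane of a matroid: a maximal proper flat. -/
def IsHyperplane (M : Matroid α) (H : Set α) : Prop :=
  M.IsFlat H ∧ H ≠ M.E ∧ ∀ F, M.IsFlat F → H ⊂ F → F = M.E

/-- A stressed hyperplane of a matroid `M` of rank `k`: a hyperplane `H` such that every
`k`-element subset of `H` is a circuit of `M`. -/
def Stressed (M : Matroid α) (H : Set α) : Prop :=
  IsHyperplane M H ∧ ∀ C ⊆ H, C.ncard = rank M → IsCircuit M C

/-- `Mt` is the relaxation of `M` at the stressed hyperplane `H`: the matroid on the same
ground set whose bases are exactly the bases of `M` together with all `(rank M)`-element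
subsets of `H`. -/
def IsRelaxation (M Mt : Matroid α) (H : Set α) : Prop :=
  Mt.E = M.E ∧ ∀ B : Set α, Mt.IsBase B ↔ (M.IsBase B ∨ (B ⊆ H ∧ B.ncard = rank M))

/-- The characterization of the Kazhdan–Lusztig polynomials `P_M` and the `Z`-polynomials
`Z_M` of matroids (on a fixed finite type): (i) both equal `1` on matroids with empty
ground set; (ii) `2 · deg P_M < rk M` when the ground set is nonempty (the zero
polynomial being allowed); (iii) `Z_M` is palindromic of degree `rk M`;
(iv) `Z_M = Σ_{S ⊆ E} t^{rk S} · P_{M ⧸ S}`, the sum over all subsets `S` of `E`. -/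
def PZaxioms (P Z : Matroid α → Polynomial ℤ) : Prop :=
  (∀ M : Matroid α, M.E = ∅ → P M = 1 ∧ Z M = 1) ∧
  (∀ M : Matroid α, M.E ≠ ∅ → (P M = 0 ∨ 2 * (P M).natDegree < rank M)) ∧
  (∀ M : Matroid α, (Z M).natDegree ≤ rank M ∧
      ∀ i ≤ rank M, (Z M).coeff i = (Z M).coeff (rank M - i)) ∧
  (∀ M : Matroid α,
      Z M = ∑ S ∈ M.E.toFinite.toFinset.powerset,
        X ^ (rk M (S : Set α)) * P (M ⧸ (S : Set α)))

section Aux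
open Set
-- rk basics
lemma le_rk {M : Matroid α} {J S : Set α} (hJ : M.Indep J) (hJS : J ⊆ S) :
    J.ncard ≤ rk M S := by
  refine le_csSup ⟨S.ncard, ?_⟩ ⟨J, hJS, hJ, rfl⟩
  rintro n ⟨I, hIS, -, rfl⟩; exact ncard_le_ncard hIS S.toFinite

lemma rk_le {M : Matroid α} {S : Set α} {n : ℕ}
    (h : ∀ J, M.Indep J → J ⊆ S → J.ncard ≤ n) : rk M S ≤ n := by
  have hne : {n | ∃ I, I ⊆ S ∧ M.Indep I ∧ I.ncard = n}.Nonempty :=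
    ⟨0, ∅, empty_subset _, M.empty_indep, by simp⟩
  apply csSup_le hne
  rintro m ⟨I, hIS, hI, rfl⟩; exact h I hI hIS

lemma rk_mono {M : Matroid α} {S T : Set α} (h : S ⊆ T) : rk M S ≤ rk M T :=
  rk_le fun J hJ hJS => le_rk hJ (hJS.trans h)

lemma rk_le_ncard {M : Matroid α} (S : Set α) : rk M S ≤ S.ncard :=
  rk_le fun J _ hJS => ncard_le_ncard hJS S.toFinite

lemma rk_basis' {M : Matroid α} {I S : Set α} (hI : M.IsBasis' I S) :
    rk M S = I.ncard := by
  refine le_antisymm (rk_le fun J hJ hJS => ?_) (le_rk hI.indep hI.subset)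
  obtain ⟨J', hJ', hJJ'⟩ := hJ.subset_isBasis'_of_subset hJS
  have := hJ'.encard_eq_encard hI
  calc J.ncard ≤ J'.ncard := ncard_le_ncard hJJ' J'.toFinite
    _ = I.ncard := by rw [ncard_def, this, ← ncard_def]

lemma rk_indep {M : Matroid α} {I : Set α} (hI : M.Indep I) : rk M I = I.ncard :=
  rk_basis' hI.isBasis_self.isBasis'

lemma rank_base {M : Matroid α} {B : Set α} (hB : M.IsBase B) : rank M = B.ncard :=
  rk_basis' hB.isBasis_ground.isBasis'

lemma ncard_diff_add_ncard_inter' (s t : Set α) :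
    (s \ t).ncard + (s ∩ t).ncard = s.ncard := by
  rw [← diff_self_inter, ncard_diff_add_ncard_of_subset inter_subset_left]

lemma ncard_inter_add_ncard_diff' (s t : Set α) :
    (s ∩ t).ncard + (s \ t).ncard = s.ncard := by
  rw [add_comm, ncard_diff_add_ncard_inter']

lemma rk_empty (M : Matroid α) : rk M ∅ = 0 :=
  Nat.le_zero.1 <| (rk_le_ncard _).trans (by simp)

lemma rk_eq_zero_iff {M : Matroid α} {S : Set α} :
    rk M S = 0 ↔ ∀ x ∈ S, ¬ M.Indep {x} := by
  constructor
  · intro h x hx hi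
    have := le_rk hi (by simpa using hx)
    simp [h, ncard_singleton] at this
  · intro h
    refine Nat.le_zero.1 (rk_le fun J hJ hJS => ?_)
    have : J = ∅ := by
      by_contra hne
      obtain ⟨x, hx⟩ := nonempty_iff_ne_empty.2 hne
      exact h x (hJS hx) (hJ.subset (by simpa using hx))
    simp [this]

-- the dual rank formula
lemma dual_rk_formula (M : Matroid α) {X : Set α} (hX : X ⊆ M.E) :
    rk M✶ X + rank M = X.ncard + rk M (M.E \ X) := by
  refine le_antisymm ?_ ?_
  · -- upper bound
    obtain ⟨K, hK⟩ := M✶.exists_isBasis' X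
    have hKi := hK.indep
    rw [dual_indep_iff_exists' ] at hKi
    obtain ⟨hKE, B', hB', hdisj⟩ := hKi
    have h1 : (B' \ X).ncard ≤ rk M (M.E \ X) :=
      le_rk (hB'.indep.subset diff_subset) (diff_subset_diff_left hB'.subset_ground)
    have h2 : K ⊆ X \ B' := subset_diff.2 ⟨hK.subset, hdisj⟩
    have h3 : (X \ B').ncard + (X ∩ B').ncard = X.ncard := by
      exact ncard_diff_add_ncard_inter' _ _
    have h4 : (B' ∩ X).ncard + (B' \ X).ncard = B'.ncard := by
      exact ncard_inter_add_ncard_diff' _ _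
    have h5 : K.ncard ≤ (X \ B').ncard := ncard_le_ncard h2 (X \ B').toFinite
    have h6 : (X ∩ B').ncard = (B' ∩ X).ncard := by rw [inter_comm]
    rw [rk_basis' hK, rank_base hB']
    omega
  · -- lower bound
    obtain ⟨I, hI⟩ := M.exists_isBasis' (M.E \ X)
    obtain ⟨B, hB, hIB⟩ := hI.indep.exists_isBase_superset
    have hBX : I = B \ X := by
      refine hI.eq_of_subset_indep (hB.indep.subset diff_subset)
        (subset_diff.2 ⟨hIB, ?_⟩) (diff_subset_diff_left hB.subset_ground)
      exact (subset_diff.1 hI.subset).2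
    have hdualind : M✶.Indep (X \ B) := by
      rw [dual_indep_iff_exists']
      exact ⟨diff_subset.trans hX, B, hB, disjoint_sdiff_left⟩
    have h1 : (X \ B).ncard ≤ rk M✶ X := le_rk hdualind diff_subset
    have h3 : (X \ B).ncard + (X ∩ B).ncard = X.ncard := by
      exact ncard_diff_add_ncard_inter' _ _
    have h4 : (B ∩ X).ncard + (B \ X).ncard = B.ncard := by
      exact ncard_inter_add_ncard_diff' _ _
    have h6 : (X ∩ B).ncard = (B ∩ X).ncard := by rw [inter_comm]
    rw [rank_base hB, rk_basis' hI, hBX]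
    omega


-- contraction lemmas
lemma contract_ground (M : Matroid α) (C : Set α) : (contract M C).E = M.E \ C := rfl

lemma contract_empty (M : Matroid α) : contract M (∅ : Set α) = M := by
  unfold contract
  rw [diff_empty, ← dual_ground, restrict_ground_eq_self, dual_dual]

lemma contract_contract (M : Matroid α) {C D : Set α} :
    contract (contract M C) D = contract M (C ∪ D) := by
  unfold contract
  rw [dual_dual, dual_ground, restrict_ground_eq]
  rw [restrict_restrict_eq _ (by rw [diff_diff]; exact diff_subset_diff_right subset_union_left)]
  rw [diff_diff]

lemma rk_restrict (M : Matroid α) {R T : Set α} (hT : T ⊆ R) :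
    rk (M ↾ R) T = rk M T := by
  refine le_antisymm (rk_le fun J hJ hJT => ?_) (rk_le fun J hJ hJT => ?_)
  · exact le_rk (restrict_indep_iff.1 hJ).1 hJT
  · exact le_rk (restrict_indep_iff.2 ⟨hJ, hJT.trans hT⟩) hJT

lemma rk_contract (M : Matroid α) {C T : Set α} (hC : C ⊆ M.E) (hT : T ⊆ M.E \ C) :
    rk (contract M C) T + rk M C = rk M (C ∪ T) := by
  set R := M.E \ C with hR
  have hTR : T ⊆ R := hT
  have hRE : R ⊆ M.E := diff_subset
  have h1 : rk ((M✶ ↾ R)✶) T + rank (M✶ ↾ R) = T.ncard + rk (M✶ ↾ R) (R \ T) := by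
    apply dual_rk_formula
    rw [restrict_ground_eq]; exact hTR
  have h2 : rk (M✶ ↾ R) (R \ T) = rk M✶ (R \ T) := rk_restrict _ diff_subset
  have h2' : rank (M✶ ↾ R) = rk M✶ R := by
    rw [rank, restrict_ground_eq, rk_restrict _ subset_rfl]
  have h3 : rk M✶ (R \ T) + rank M = (R \ T).ncard + rk M (M.E \ (R \ T)) :=
    dual_rk_formula M (diff_subset.trans hRE)
  have h4 : rk M✶ R + rank M = R.ncard + rk M (M.E \ R) := dual_rk_formula M hRE
  have e1 : M.E \ R = C := by rw [hR, diff_diff_cancel_left hC]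
  have e2 : M.E \ (R \ T) = C ∪ T := by
    rw [hR, diff_diff_right, diff_diff_cancel_left hC, inter_eq_self_of_subset_right
      (hT.trans diff_subset)]
  have e3 : T.ncard + (R \ T).ncard = R.ncard := by
    rw [add_comm]; exact ncard_diff_add_ncard_of_subset hTR
  rw [e1] at h4; rw [e2] at h3
  have : rk (contract M C) T = rk ((M✶ ↾ R)✶) T := rfl
  omega

lemma rank_contract (M : Matroid α) {C : Set α} (hC : C ⊆ M.E) :
    rank (contract M C) + rk M C = rank M := by
  have := rk_contract M hC (subset_rfl : M.E \ C ⊆ M.E \ C)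
  rwa [union_diff_cancel hC] at this

-- loop machinery
def loopSet (N : Matroid α) : Set α := {x ∈ N.E | rk N {x} = 0}

def NoLoops (N : Matroid α) : Prop := ∀ x ∈ N.E, rk N {x} ≠ 0

lemma loopSet_subset_ground (N : Matroid α) : loopSet N ⊆ N.E := fun _ h => h.1

lemma rk_eq_zero_iff_subset_loopSet {N : Matroid α} {S : Set α} (hS : S ⊆ N.E) :
    rk N S = 0 ↔ S ⊆ loopSet N := by
  constructor
  · intro h x hx
    refine ⟨hS hx, Nat.le_zero.1 ?_⟩
    rw [← h]
    exact rk_mono (by simpa using hx)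
  · intro h
    rw [rk_eq_zero_iff]
    intro x hx hind
    have h0 : rk N {x} = 0 := (h hx).2
    rw [rk_indep hind, ncard_singleton] at h0
    omega

lemma rk_pos_of_not_subset_loopSet {N : Matroid α} {S : Set α} (hS : S ⊆ N.E)
    (h : ¬ S ⊆ loopSet N) : rk N S ≠ 0 := fun h0 =>
  h ((rk_eq_zero_iff_subset_loopSet hS).1 h0)

lemma loopSet_contract {N : Matroid α} {S : Set α} (hS : S ⊆ loopSet N) :
    loopSet (contract N S) = loopSet N \ S := by
  have hSE : S ⊆ N.E := hS.trans (loopSet_subset_ground N)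
  have hS0 : rk N S = 0 := (rk_eq_zero_iff_subset_loopSet hSE).2 hS
  ext x
  simp only [loopSet, mem_setOf_eq, contract_ground, mem_diff]
  constructor
  · rintro ⟨⟨hxE, hxS⟩, h0⟩
    have := rk_contract N hSE (T := ({x} : Set α)) (by simpa using ⟨hxE, hxS⟩)
    rw [h0, hS0] at this
    have hsub : S ∪ {x} ⊆ loopSet N :=
      (rk_eq_zero_iff_subset_loopSet (union_subset hSE (by simpa using hxE))).1 this.symm
    exact ⟨⟨hxE, (hsub (by simp)).2⟩, hxS⟩
  · rintro ⟨⟨hxE, hx0⟩, hxS⟩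
    refine ⟨⟨hxE, hxS⟩, ?_⟩
    have hrk := rk_contract N hSE (T := ({x} : Set α)) (by simpa using ⟨hxE, hxS⟩)
    rw [hS0, add_zero] at hrk
    have : S ∪ {x} ⊆ loopSet N := union_subset hS (by simpa using ⟨hxE, hx0⟩)
    rw [hrk]
    exact (rk_eq_zero_iff_subset_loopSet (union_subset hSE (by simpa using hxE))).2 this

lemma rank_contract_loops {N : Matroid α} {S : Set α} (hS : S ⊆ loopSet N) :
    rank (contract N S) = rank N := by
  have hSE : S ⊆ N.E := hS.trans (loopSet_subset_ground N)
  have := rank_contract N hSE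
  rw [(rk_eq_zero_iff_subset_loopSet hSE).2 hS, add_zero] at this
  exact this

lemma ground_ne_of_rank_pos {N : Matroid α} (h : rank N ≠ 0) : N.E ≠ ∅ := by
  intro he
  rw [rank, he, rk_empty] at h
  exact h rfl

section PZsec
variable {P Z : Matroid α → Polynomial ℤ}

lemma P_empty (hPZ : PZaxioms P Z) {N : Matroid α} (h : N.E = ∅) : P N = 1 := (hPZ.1 N h).1

lemma P_rank_zero (hPZ : PZaxioms P Z) {N : Matroid α} (h : rank N = 0) (hne : N.E ≠ ∅) :
    P N = 0 := by
  rcases hPZ.2.1 N hne with h0 | h2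
  · exact h0
  · rw [h] at h2; omega

lemma Z_coeff (hPZ : PZaxioms P Z) (N : Matroid α) (j : ℕ) :
    (Z N).coeff j = ∑ S ∈ N.E.toFinite.toFinset.powerset,
      (if rk N (S : Set α) ≤ j then (P (contract N (S : Set α))).coeff (j - rk N (S : Set α))
        else 0) := by
  rw [hPZ.2.2.2 N, finset_sum_coeff]
  refine Finset.sum_congr rfl fun S _ => ?_
  rw [mul_comm, coeff_mul_X_pow']

lemma coe_subset_ground {N : Matroid α} {S : Finset α}
    (hS : S ∈ N.E.toFinite.toFinset.powerset) : (S : Set α) ⊆ N.E := by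
  have := Finset.coe_subset.2 (Finset.mem_powerset.1 hS)
  rwa [Set.Finite.coe_toFinset] at this

lemma coe_eq_ground_iff {N : Matroid α} {S : Finset α} :
    S = N.E.toFinite.toFinset ↔ (S : Set α) = N.E := by
  rw [← Finset.coe_inj, Set.Finite.coe_toFinset]

lemma contract_ground_ne {N : Matroid α} {S : Finset α}
    (hS : S ∈ N.E.toFinite.toFinset.powerset) (hne : S ≠ N.E.toFinite.toFinset) :
    (contract N (S : Set α)).E ≠ ∅ := by
  rw [contract_ground]
  have hsub : (S : Set α) ⊂ N.E := ssubset_of_subset_of_ne (coe_subset_ground hS)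
    (fun h => hne (coe_eq_ground_iff.2 h))
  obtain ⟨x, hxE, hxS⟩ := exists_of_ssubset hsub
  exact fun h => (h ▸ (⟨hxE, hxS⟩ : x ∈ N.E \ (S : Set α)) : x ∈ (∅ : Set α))

lemma Z_coeff_rank (hPZ : PZaxioms P Z) (N : Matroid α) : (Z N).coeff (rank N) = 1 := by
  rw [Z_coeff hPZ]
  rw [Finset.sum_eq_single_of_mem (N.E.toFinite.toFinset) (Finset.mem_powerset_self _)
    (fun S hS hne => ?_)]
  · have hc : ((N.E.toFinite.toFinset : Finset α) : Set α) = N.E := Set.Finite.coe_toFinset _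
    have hgr : (contract N ((N.E.toFinite.toFinset : Finset α) : Set α)).E = ∅ := by
      rw [contract_ground, hc, diff_self]
    rw [P_empty hPZ hgr, hc, ← rank, if_pos le_rfl, Nat.sub_self, coeff_one_zero]
  · have hSE := coe_subset_ground hS
    have hle : rk N (S : Set α) ≤ rank N := rk_mono hSE
    rw [if_pos hle]
    have hgr := contract_ground_ne hS hne
    have hrr := rank_contract N hSE
    rcases hPZ.2.1 _ hgr with h0 | h2
    · simp [h0]
    · exact coeff_eq_zero_of_natDegree_lt (by omega)

lemma Z_coeff_zero (hPZ : PZaxioms P Z) (N : Matroid α) : (Z N).coeff 0 = 1 := by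
  have h := (hPZ.2.2.1 N).2 0 (Nat.zero_le _)
  rw [Nat.sub_zero] at h
  rw [h, Z_coeff_rank hPZ]

lemma P_coeff_zero (hPZ : PZaxioms P Z) {N : Matroid α} (hN : NoLoops N) :
    (P N).coeff 0 = 1 := by
  have h := Z_coeff_zero hPZ N
  rw [Z_coeff hPZ] at h
  rw [Finset.sum_eq_single_of_mem (∅ : Finset α) (Finset.empty_mem_powerset _)
    (fun S hS hne => ?_)] at h
  · simpa [rk_empty, contract_empty] using h
  · have hSE := coe_subset_ground hS
    have hne' : (S : Set α).Nonempty := by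
      simpa using Finset.nonempty_iff_ne_empty.2 hne
    obtain ⟨x, hx⟩ := hne'
    have : rk N (S : Set α) ≠ 0 := by
      apply rk_pos_of_not_subset_loopSet hSE
      intro hsub
      exact hN x (hSE hx) (hsub hx).2
    rw [if_neg (by omega)]

lemma P_rank_one_noloops (hPZ : PZaxioms P Z) {N : Matroid α} (h1 : rank N = 1)
    (hN : NoLoops N) : P N = 1 := by
  have hne : N.E ≠ ∅ := ground_ne_of_rank_pos (by omega)
  have hc := P_coeff_zero hPZ hN
  rcases hPZ.2.1 N hne with h0 | h2
  · rw [h0] at hc; simp at hc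
  · rw [h1] at h2
    have hd : (P N).natDegree = 0 := by omega
    rw [Polynomial.eq_C_of_natDegree_le_zero (le_of_eq hd), hc, map_one]

lemma P_rank_one_loops (hPZ : PZaxioms P Z) :
    ∀ n : ℕ, ∀ N : Matroid α, rank N = 1 → (loopSet N).ncard ≤ n →
      (loopSet N).Nonempty → P N = 0 := by
  intro n
  induction n with
  | zero =>
    intro N _ hcard hne
    rw [Nat.le_zero, ncard_eq_zero ((loopSet N).toFinite)] at hcard
    rw [hcard] at hne
    exact absurd hne (by simp [Set.not_nonempty_empty])
  | succ n ih =>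
    intro N h1 hcard hne
    have hLE : loopSet N ⊆ N.E := loopSet_subset_ground N
    have hLcoe : (((loopSet N).toFinite.toFinset : Finset α) : Set α) = loopSet N :=
      Set.Finite.coe_toFinset _
    have hLmem : (loopSet N).toFinite.toFinset ∈ N.E.toFinite.toFinset.powerset := by
      rw [Finset.mem_powerset, Set.Finite.toFinset_subset_toFinset]
      exact hLE
    have hLne : (∅ : Finset α) ≠ (loopSet N).toFinite.toFinset := by
      intro h
      rw [← Finset.coe_inj, hLcoe, Finset.coe_empty] at h
      exact nonempty_iff_ne_empty.1 hne h.symm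
    have key := Z_coeff_zero hPZ N
    rw [Z_coeff hPZ] at key
    rw [Finset.sum_eq_add_of_mem (∅ : Finset α) ((loopSet N).toFinite.toFinset)
      (Finset.empty_mem_powerset _) hLmem hLne (fun S hS hSne => ?_)] at key
    · -- evaluate the two terms
      have hterm1 : (if rk N ((∅ : Finset α) : Set α) ≤ 0 then
          (P (contract N ((∅ : Finset α) : Set α))).coeff (0 - rk N ((∅ : Finset α) : Set α))
          else 0) = (P N).coeff 0 := by
        simp [rk_empty, contract_empty]
      have hL0 : rk N (loopSet N) = 0 := (rk_eq_zero_iff_subset_loopSet hLE).2 subset_rfl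
      have hterm2 : (if rk N (((loopSet N).toFinite.toFinset : Finset α) : Set α) ≤ 0 then
          (P (contract N (((loopSet N).toFinite.toFinset : Finset α) : Set α))).coeff
            (0 - rk N (((loopSet N).toFinite.toFinset : Finset α) : Set α))
          else 0) = 1 := by
        rw [hLcoe, hL0, if_pos le_rfl, Nat.sub_zero]
        have hP1 : P (contract N (loopSet N)) = 1 := by
          apply P_rank_one_noloops hPZ
          · rw [rank_contract_loops subset_rfl, h1]
          · intro x hx hx0
            have : x ∈ loopSet (contract N (loopSet N)) := ⟨hx, hx0⟩
            rw [loopSet_contract subset_rfl, diff_self] at this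
            exact this
        rw [hP1]
        simp
      rw [hterm1, hterm2] at key
      have hc0 : (P N).coeff 0 = 0 := by omega
      have hne' : N.E ≠ ∅ := ground_ne_of_rank_pos (by omega)
      rcases hPZ.2.1 N hne' with h0 | h2
      · exact h0
      · rw [h1] at h2
        have hd : (P N).natDegree = 0 := by omega
        rw [Polynomial.eq_C_of_natDegree_le_zero (le_of_eq hd), hc0, map_zero]
    · -- vanishing of other terms
      obtain ⟨hS1, hS2⟩ := hSne
      have hSE := coe_subset_ground hS
      by_cases h0 : rk N (S : Set α) = 0
      · have hSL : (S : Set α) ⊆ loopSet N := (rk_eq_zero_iff_subset_loopSet hSE).1 h0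
        rw [if_pos (by omega)]
        have hssub : (S : Set α) ⊂ loopSet N := by
          refine ssubset_of_subset_of_ne hSL (fun h => hS2 ?_)
          rw [← Finset.coe_inj, hLcoe, h]
        have hPc : P (contract N (S : Set α)) = 0 := by
          apply ih
          · rw [rank_contract_loops hSL, h1]
          · rw [loopSet_contract hSL]
            have hSne' : (S : Set α).Nonempty := by
              simpa using Finset.nonempty_iff_ne_empty.2 hS1
            have h5 : (loopSet N \ (S : Set α)).ncard + (S : Set α).ncard = (loopSet N).ncard :=
              ncard_diff_add_ncard_of_subset hSL (loopSet N).toFinite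
            have h6 : 1 ≤ (S : Set α).ncard := by
              rw [Nat.one_le_iff_ne_zero, Ne, ncard_eq_zero (S : Set α).toFinite]
              exact fun h => (nonempty_iff_ne_empty.1 hSne') h
            omega
          · rw [loopSet_contract hSL]
            obtain ⟨x, hxL, hxS⟩ := exists_of_ssubset hssub
            exact ⟨x, hxL, hxS⟩
        rw [hPc]
        simp
      · rw [if_neg (by omega)]

end PZsec

end Aux

/-- Let `(E, ℋ)` be a Steiner system of type `(3,6,22)`: `|E| = 22`,
every block `Bl ∈ ℋ` is a `6`-element subset of `E`, and every `3`-element subset of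
`E` is contained in exactly one block.  Let `M` be its associated matroid of rank `4`,
whose bases are the `4`-element subsets of `E` contained in no block.  Then
`P_M(t) = 1 + 55t`. -/
theorem steiner_3_6_22_KL_polynomial {β : Type} [Fintype β]
    (P Z : Matroid β → Polynomial ℤ) (hPZ : PZaxioms P Z)
    (E : Set β) (Blocks : Set (Set β))
    (hEcard : E.ncard = 22)
    (hBlocks : ∀ Bl ∈ Blocks, Bl ⊆ E ∧ Bl.ncard = 6)
    (hSteiner : ∀ D ⊆ E, D.ncard = 3 → ∃! Bl, Bl ∈ Blocks ∧ D ⊆ Bl)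
    (M : Matroid β) (hME : M.E = E)
    (hMB : ∀ B : Set β, M.IsBase B ↔ B ⊆ E ∧ B.ncard = 4 ∧ ∀ Bl ∈ Blocks, ¬B ⊆ Bl) :
    P M = 1 + C 55 * X := by
  classical
  subst hME
  have hBlE : ∀ Bl ∈ Blocks, Bl ⊆ M.E := fun Bl h => (hBlocks Bl h).1
  have hBl6 : ∀ Bl ∈ Blocks, Bl.ncard = 6 := fun Bl h => (hBlocks Bl h).2
  have hExRest : ∀ Bl ∈ Blocks, ∃ x ∈ M.E, x ∉ Bl := by
    intro Bl hBl
    by_contra h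
    push_neg at h
    have h22 : M.E.ncard ≤ Bl.ncard := Set.ncard_le_ncard h Bl.toFinite
    rw [hEcard, hBl6 Bl hBl] at h22
    omega
  have hbase : ∀ D Bl x, D ⊆ M.E → D.ncard = 3 → Bl ∈ Blocks → D ⊆ Bl → x ∈ M.E → x ∉ Bl →
      M.IsBase (insert x D) := by
    intro D Bl x hDE hD3 hBl hDBl hx hxBl
    rw [hMB]
    refine ⟨Set.insert_subset hx hDE, ?_, ?_⟩
    · rw [Set.ncard_insert_of_notMem (fun hxD => hxBl (hDBl hxD)) D.toFinite, hD3]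
    · intro Bl' hBl' hsub
      have hD' : D ⊆ Bl' := (Set.subset_insert x D).trans hsub
      have := (hSteiner D hDE hD3).unique ⟨hBl', hD'⟩ ⟨hBl, hDBl⟩
      exact hxBl (this ▸ hsub (Set.mem_insert x D))
  have s3indep : ∀ D, D ⊆ M.E → D.ncard = 3 → M.Indep D := by
    intro D hDE hD3
    obtain ⟨Bl, ⟨hBl, hDBl⟩, -⟩ := hSteiner D hDE hD3
    obtain ⟨x, hx, hxBl⟩ := hExRest Bl hBl
    exact (hbase D Bl x hDE hD3 hBl hDBl hx hxBl).indep.subset (Set.subset_insert x D)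
  have sIndepLe3 : ∀ I, I ⊆ M.E → I.ncard ≤ 3 → M.Indep I := by
    intro I hIE h3
    obtain ⟨D, hID, hDE, hD3⟩ := Set.exists_subsuperset_card_eq hIE h3 (by rw [hEcard]; omega)
    exact (s3indep D hDE hD3).subset hID
  have sIndepCard : ∀ I, M.Indep I → I.ncard ≤ 4 := by
    intro I hI
    obtain ⟨B, hB, hIB⟩ := hI.exists_isBase_superset
    have hB4 := ((hMB B).1 hB).2.1
    calc I.ncard ≤ B.ncard := Set.ncard_le_ncard hIB B.toFinite
      _ = 4 := hB4
  have rkLe4 : ∀ S : Set β, rk M S ≤ 4 := fun S => rk_le fun J hJ _ => sIndepCard J hJ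
  have rk_small : ∀ S : Set β, S ⊆ M.E → S.ncard ≤ 3 → rk M S = S.ncard := fun S h1 h2 =>
    rk_indep (sIndepLe3 S h1 h2)
  have sBase4 : ∀ I, M.Indep I → I.ncard = 4 → M.IsBase I := by
    intro I hI h4
    obtain ⟨B, hB, hIB⟩ := hI.exists_isBase_superset
    have hBc := ((hMB B).1 hB).2.1
    have hIeq : I = B := Set.eq_of_subset_of_ncard_le hIB (by omega) B.toFinite
    rwa [hIeq]
  have rkBlockLe : ∀ (S : Set β) Bl, Bl ∈ Blocks → S ⊆ Bl → rk M S ≤ 3 := by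
    intro S Bl hBl hSBl
    refine rk_le fun J hJ hJS => ?_
    by_contra h
    have h4 : J.ncard = 4 := by have := sIndepCard J hJ; omega
    exact ((hMB J).1 (sBase4 J hJ h4)).2.2 Bl hBl (hJS.trans hSBl)
  have rk3 : ∀ (S : Set β) Bl, Bl ∈ Blocks → S ⊆ Bl → 3 ≤ S.ncard → rk M S = 3 := by
    intro S Bl hBl hSBl h3
    refine le_antisymm (rkBlockLe S Bl hBl hSBl) ?_
    obtain ⟨D, hDS, hD3⟩ := Set.exists_subset_card_eq h3
    have hDE : D ⊆ M.E := hDS.trans (hSBl.trans (hBlE Bl hBl))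
    have := le_rk (s3indep D hDE hD3) hDS
    omega
  have rkBig : ∀ S : Set β, S ⊆ M.E → 3 ≤ S.ncard → (∀ Bl ∈ Blocks, ¬ S ⊆ Bl) → rk M S = 4 := by
    intro S hSE h3 hnbl
    refine le_antisymm (rkLe4 S) ?_
    obtain ⟨D, hDS, hD3⟩ := Set.exists_subset_card_eq h3
    have hDE : D ⊆ M.E := hDS.trans hSE
    obtain ⟨Bl, ⟨hBl, hDBl⟩, -⟩ := hSteiner D hDE hD3
    obtain ⟨x, hxS, hxBl⟩ := Set.not_subset.1 (hnbl Bl hBl)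
    have hB := hbase D Bl x hDE hD3 hBl hDBl (hSE hxS) hxBl
    have hcard : (insert x D).ncard = 4 := ((hMB _).1 hB).2.1
    have := le_rk hB.indep (Set.insert_subset hxS hDS)
    omega
  have rank4 : rank M = 4 := by
    refine rkBig M.E subset_rfl (by rw [hEcard]; omega) ?_
    intro Bl hBl hsub
    have h22 := Set.ncard_le_ncard hsub Bl.toFinite
    rw [hEcard, hBl6 Bl hBl] at h22
    omega
  have noLoopsM : NoLoops M := by
    intro x hx h0
    rw [rk_small {x} (by simpa using hx) (by simp)] at h0
    simp at h0
  have hEfincard : M.E.toFinite.toFinset.card = 22 := by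
    rw [← Set.ncard_eq_toFinset_card M.E, hEcard]
  -- blocks as a finset
  set F := M.E.toFinite.toFinset.powerset.filter
      (fun S : Finset β => ((S : Finset β) : Set β) ∈ Blocks) with hF
  have hFcard : F.card = 77 := by
    set T3 := M.E.toFinite.toFinset.powersetCard 3 with hT3
    have hT3card : T3.card = 1540 := by
      rw [hT3, Finset.card_powersetCard, hEfincard]
      decide
    have hfhyp : ∀ D : Finset β, D ∈ T3 → (D : Set β) ⊆ M.E ∧ (D : Set β).ncard = 3 := by
      intro D hD
      rw [Finset.mem_powersetCard] at hD
      constructor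
      · have := Finset.coe_subset.2 hD.1
        rwa [Set.Finite.coe_toFinset] at this
      · rw [Set.ncard_coe_finset, hD.2]
    classical
    set f : Finset β → Finset β := fun D =>
      if h : (D : Set β) ⊆ M.E ∧ (D : Set β).ncard = 3 then
        ((hSteiner _ h.1 h.2).exists.choose.toFinite.toFinset) else ∅ with hfdef
    have hfspec : ∀ D ∈ T3, ((f D : Finset β) : Set β) ∈ Blocks ∧ (D : Set β) ⊆ (f D : Set β) ∧
        ∀ Bl ∈ Blocks, (D : Set β) ⊆ Bl → ((f D : Finset β) : Set β) = Bl := by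
      intro D hD
      have h := hfhyp D hD
      have hfD : f D = ((hSteiner _ h.1 h.2).exists.choose.toFinite.toFinset) := by
        rw [hfdef]; exact dif_pos h
      have hch := (hSteiner _ h.1 h.2).exists.choose_spec
      have hcoe : (((hSteiner _ h.1 h.2).exists.choose.toFinite.toFinset : Finset β) : Set β) =
          (hSteiner _ h.1 h.2).exists.choose := Set.Finite.coe_toFinset _
      rw [hfD, hcoe]
      refine ⟨hch.1, hch.2, fun Bl hBl hDBl => ?_⟩
      exact (hSteiner _ h.1 h.2).unique hch ⟨hBl, hDBl⟩
    have hmem : ∀ D ∈ T3, f D ∈ F := by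
      intro D hD
      obtain ⟨h1, h2, -⟩ := hfspec D hD
      rw [hF, Finset.mem_filter]
      refine ⟨?_, h1⟩
      rw [Finset.mem_powerset]
      intro y hy
      have hy' : (y : β) ∈ ((f D : Finset β) : Set β) := hy
      have := hBlE _ h1 hy'
      simpa [Set.Finite.mem_toFinset] using this
    have hfib : ∀ BlF ∈ F, (T3.filter (fun D => f D = BlF)).card = 20 := by
      intro BlF hBlF
      rw [hF, Finset.mem_filter, Finset.mem_powerset] at hBlF
      obtain ⟨hBlFE, hBlFBl⟩ := hBlF
      have hBlFcard : BlF.card = 6 := by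
        have := hBl6 _ hBlFBl
        rwa [Set.ncard_coe_finset] at this
      have hfilt : T3.filter (fun D => f D = BlF) = BlF.powersetCard 3 := by
        ext D
        constructor
        · intro hD'
          rw [Finset.mem_filter] at hD'
          obtain ⟨hD, hfD⟩ := hD'
          obtain ⟨h1, h2, -⟩ := hfspec D hD
          rw [hfD] at h2
          rw [Finset.mem_powersetCard]
          refine ⟨Finset.coe_subset.1 h2, ?_⟩
          have := (Finset.mem_powersetCard.1 (by rwa [hT3] at hD)).2
          exact this
        · intro hD'
          rw [Finset.mem_powersetCard] at hD'
          obtain ⟨hDBl, hD3⟩ := hD'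
          have hDT3 : D ∈ T3 := by
            rw [hT3, Finset.mem_powersetCard]
            exact ⟨hDBl.trans hBlFE, hD3⟩
          rw [Finset.mem_filter]
          refine ⟨hDT3, ?_⟩
          obtain ⟨h1, h2, h3⟩ := hfspec D hDT3
          have := h3 (↑BlF) hBlFBl (Finset.coe_subset.2 hDBl)
          exact Finset.coe_inj.1 this
      rw [hfilt, Finset.card_powersetCard, hBlFcard]
      decide
    have hsum := Finset.card_eq_sum_card_fiberwise hmem
    rw [hT3card, Finset.sum_congr rfl hfib, Finset.sum_const, smul_eq_mul] at hsum
    omega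
  -- coefficient 1 of Z M
  have hZ1 : (Z M).coeff 1 = (P M).coeff 1 + 22 := by
    rw [Z_coeff hPZ]
    have hpt : ∀ S ∈ M.E.toFinite.toFinset.powerset,
        (if rk M (S : Set β) ≤ 1 then
          (P (contract M (S : Set β))).coeff (1 - rk M (S : Set β)) else 0)
        = (if S = (∅ : Finset β) then (P M).coeff 1 else 0) +
          (if S.card = 1 then (1 : ℤ) else 0) := by
      intro S hS
      have hSE : (S : Set β) ⊆ M.E := coe_subset_ground hS
      rcases Nat.lt_or_ge S.card 2 with hc | hc
      · rcases Nat.lt_or_ge S.card 1 with hc0 | hc1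
        · -- S = ∅
          have hS0 : S = ∅ := Finset.card_eq_zero.1 (by omega)
          subst hS0
          simp [rk_empty, contract_empty]
        · -- S a singleton
          have hS1 : S.card = 1 := by omega
          obtain ⟨e, he⟩ := Finset.card_eq_one.1 hS1
          subst he
          have hcoe : (({e} : Finset β) : Set β) = ({e} : Set β) := by simp
          have heE : e ∈ M.E := hSE (by simp)
          have hrk1 : rk M (({e} : Finset β) : Set β) = 1 := by
            rw [hcoe, rk_small {e} (by simpa using heE) (by simp)]
            simp
          rw [hrk1, if_pos (by omega), if_neg (by simp), if_pos hS1]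
          have hNL : NoLoops (contract M (({e} : Finset β) : Set β)) := by
            rw [hcoe]
            intro x hx h0
            rw [contract_ground] at hx
            have hrc := rk_contract M (show ({e} : Set β) ⊆ M.E by simpa using heE)
              (T := ({x} : Set β)) (by simpa using hx)
            rw [h0] at hrc
            have hxe : x ≠ e := by
              intro h; exact hx.2 (by simp [h])
            have hu : ({e} : Set β) ∪ {x} = ({e, x} : Set β) := by
              ext y; simp [or_comm]
            rw [hu] at hrc
            have h2 : rk M ({e, x} : Set β) = 2 := by
              rw [rk_small _ (by
                intro y hy
                rcases hy with hy | hy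
                · exact hy ▸ heE
                · exact (by simpa using hy : y = x) ▸ hx.1) (by
                  rw [Set.ncard_pair (Ne.symm hxe)]; omega)]
              exact Set.ncard_pair (Ne.symm hxe)
            rw [rk_small {e} (by simpa using heE) (by simp), Set.ncard_singleton] at hrc
            omega
          rw [Nat.sub_self, P_coeff_zero hPZ hNL]
          ring
      · -- |S| ≥ 2 : rk ≥ 2
        have h2 : 2 ≤ rk M (S : Set β) := by
          obtain ⟨T, hTS, hT2⟩ := Set.exists_subset_card_eq
            (show 2 ≤ (S : Set β).ncard by rwa [Set.ncard_coe_finset])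
          have := le_rk (sIndepLe3 T (hTS.trans hSE) (by omega)) hTS
          omega
        rw [if_neg (by omega), if_neg (by
            intro h; subst h; simp at hc), if_neg (by omega)]
        ring
    rw [Finset.sum_congr rfl hpt, Finset.sum_add_distrib]
    have e1 : (∑ S ∈ M.E.toFinite.toFinset.powerset,
        if S = (∅ : Finset β) then (P M).coeff 1 else 0) = (P M).coeff 1 := by
      rw [Finset.sum_eq_single_of_mem (∅ : Finset β) (Finset.empty_mem_powerset _)
        (fun b _ hb => if_neg hb), if_pos rfl]
    have e2 : (∑ S ∈ M.E.toFinite.toFinset.powerset,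
        if S.card = 1 then (1 : ℤ) else 0) = 22 := by
      rw [Finset.sum_boole, ← Finset.powersetCard_eq_filter, Finset.card_powersetCard,
        hEfincard]
      norm_num
    rw [e1, e2]
  -- coefficient 3 of Z M
  have hZ3 : (Z M).coeff 3 = 77 := by
    rw [Z_coeff hPZ]
    have hpt : ∀ S ∈ M.E.toFinite.toFinset.powerset,
        (if rk M (S : Set β) ≤ 3 then
          (P (contract M (S : Set β))).coeff (3 - rk M (S : Set β)) else 0)
        = (if ((S : Finset β) : Set β) ∈ Blocks then (1 : ℤ) else 0) := by
      intro S hS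
      have hSE : (S : Set β) ⊆ M.E := coe_subset_ground hS
      by_cases hBlk : ((S : Finset β) : Set β) ∈ Blocks
      · have hS6 : (S : Set β).ncard = 6 := hBl6 _ hBlk
        have hrk : rk M (S : Set β) = 3 := rk3 _ _ hBlk subset_rfl (by omega)
        have hrc := rank_contract M hSE
        rw [hrk, rank4] at hrc
        have hNL : NoLoops (contract M (S : Set β)) := by
          intro x hx h0
          rw [contract_ground] at hx
          have hrc2 := rk_contract M hSE (T := ({x} : Set β)) (by simpa using hx)
          rw [h0, hrk] at hrc2
          have hrkU : rk M ((S : Set β) ∪ {x}) = 4 := by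
            apply rkBig
            · exact Set.union_subset hSE (by simpa using hx.1)
            · have := Set.ncard_le_ncard (Set.subset_union_left (s := (S : Set β))
                (t := ({x} : Set β))) (((S : Set β) ∪ {x}).toFinite)
              omega
            · intro Bl' hBl' hsub
              obtain ⟨D, hDS, hD3⟩ := Set.exists_subset_card_eq
                (show 3 ≤ (S : Set β).ncard by omega)
              have := (hSteiner D (hDS.trans hSE) hD3).unique
                ⟨hBl', hDS.trans ((Set.subset_union_left).trans hsub)⟩ ⟨hBlk, hDS⟩
              exact hx.2 (this ▸ hsub (Set.mem_union_right _ rfl))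
          omega
        have hP1 : P (contract M (S : Set β)) = 1 := P_rank_one_noloops hPZ (by omega) hNL
        rw [if_pos (by omega), if_pos hBlk, hrk, Nat.sub_self, hP1, coeff_one_zero]
      · rw [if_neg hBlk]
        by_cases h3 : rk M (S : Set β) = 3
        · -- rank-3 set not a block: contraction has a loop
          have hcard3 : 3 ≤ (S : Set β).ncard := h3 ▸ rk_le_ncard (M := M) (S : Set β)
          have hInBl : ∃ Bl ∈ Blocks, (S : Set β) ⊆ Bl := by
            by_contra h
            push_neg at h
            rw [rkBig _ hSE hcard3 h] at h3
            omega
          obtain ⟨Bl, hBl, hSBl⟩ := hInBl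
          have hne : (S : Set β) ≠ Bl := fun h => hBlk (h ▸ hBl)
          obtain ⟨x, hxBl, hxS⟩ := Set.exists_of_ssubset (ssubset_of_subset_of_ne hSBl hne)
          have hxE : x ∈ M.E := hBlE _ hBl hxBl
          have hrkU : rk M ((S : Set β) ∪ {x}) = 3 := by
            apply rk3 _ Bl hBl (Set.union_subset hSBl (by simpa using hxBl))
            have := Set.ncard_le_ncard (Set.subset_union_left (s := (S : Set β))
              (t := ({x} : Set β))) (((S : Set β) ∪ {x}).toFinite)
            omega
          have hrc2 := rk_contract M hSE (T := ({x} : Set β))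
            (by simp only [Set.singleton_subset_iff, Set.mem_diff]; exact ⟨hxE, hxS⟩)
          rw [h3, hrkU] at hrc2
          have hloop : x ∈ loopSet (contract M (S : Set β)) := by
            refine ⟨?_, by omega⟩
            rw [contract_ground]
            exact ⟨hxE, hxS⟩
          have hrc := rank_contract M hSE
          rw [h3, rank4] at hrc
          have hP0 : P (contract M (S : Set β)) = 0 :=
            P_rank_one_loops hPZ (loopSet (contract M (S : Set β))).ncard _
              (by omega) le_rfl ⟨x, hloop⟩
          rw [if_pos (by omega), hP0, coeff_zero]
        · by_cases h4 : rk M (S : Set β) = 4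
          · rw [if_neg (by omega)]
          · have hr2 : rk M (S : Set β) ≤ 2 := by
              have := rkLe4 (S : Set β)
              omega
            rw [if_pos (by omega)]
            have hSne : S ≠ M.E.toFinite.toFinset := by
              intro h
              have : (S : Set β) = M.E := coe_eq_ground_iff.1 h
              rw [this, ← rank, rank4] at h4
              exact h4 rfl
            have hgr := contract_ground_ne hS hSne
            have hrc := rank_contract M hSE
            rw [rank4] at hrc
            rcases hPZ.2.1 _ hgr with h0 | h2
            · rw [h0, coeff_zero]
            · exact coeff_eq_zero_of_natDegree_lt (by omega)
    rw [Finset.sum_congr rfl hpt, Finset.sum_boole, ← hF, hFcard]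
    norm_num
  -- palindromicity and conclusion
  have hZ13 : (Z M).coeff 1 = (Z M).coeff 3 := by
    have h := (hPZ.2.2.1 M).2 1 (by rw [rank4]; omega)
    rw [rank4] at h
    simpa using h
  have hp1 : (P M).coeff 1 = 55 := by
    rw [hZ1, hZ3] at hZ13
    omega
  have hp0 : (P M).coeff 0 = 1 := P_coeff_zero hPZ noLoopsM
  have hdeg : (P M).natDegree ≤ 1 := by
    rcases hPZ.2.1 M (ground_ne_of_rank_pos (by omega)) with h0 | h2
    · rw [h0] at hp0; simp at hp0
    · rw [rank4] at h2; omega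
  have hXP := Polynomial.eq_X_add_C_of_natDegree_le_one hdeg
  rw [hXP, hp0, hp1, map_one]
  ring


end KLPaper
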